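/- Let k be a field of characteristic p, A = k[x]/(x^{p^r}) with x primitive. Then as an algebra, A* ≅ ⨂_{i=0}^{r−1} k[y_i]/(y_i^p), where y_i = x^{p^i *}; in particular, (x^{p^i *})^p = 0 and the elements x^{p^i *}, 0 ≤ i ≤ r−1, generate A* as an algebra with x^{i*} expressible via the products determined by the base-p digits of i. -/

import Mathlib

private lemma lucasA {p : ℕ} (hp : p.Prime) :
    ∀ j m d : ℕ, m < p ^ j → Nat.choose (d * p ^ j + m) m ≡ 1 [MOD p] := by
  haveI : Fact p.Prime := ⟨hp⟩
  intro j
  induction j with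
  | zero =>
    intro m d hm
    have hm0 : m = 0 := by simpa using hm
    subst hm0
    simp [Nat.ModEq.refl]
  | succ j ih =>
    intro m d hm
    have h1 : (d * p ^ (j + 1) + m) % p = m % p := by
      rw [pow_succ, ← mul_assoc, mul_comm (d * p ^ j) p, Nat.mul_add_mod]
    have h2 : (d * p ^ (j + 1) + m) / p = d * p ^ j + m / p := by
      rw [pow_succ, ← mul_assoc, add_comm, Nat.add_mul_div_right _ _ hp.pos, add_comm]
    have h3 : m / p < p ^ j := by
      rw [Nat.div_lt_iff_lt_mul hp.pos, ← pow_succ]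
      exact hm
    calc Nat.choose (d * p ^ (j + 1) + m) m
        ≡ Nat.choose ((d * p ^ (j + 1) + m) % p) (m % p) *
            Nat.choose ((d * p ^ (j + 1) + m) / p) (m / p) [MOD p] :=
          Choose.choose_modEq_choose_mod_mul_choose_div_nat
      _ = Nat.choose (d * p ^ j + m / p) (m / p) := by
          rw [h1, h2, Nat.choose_self, one_mul]
      _ ≡ 1 [MOD p] := ih (m / p) d h3

private lemma lucasB {p : ℕ} (hp : p.Prime) :
    ∀ j d : ℕ, Nat.choose ((d + 1) * p ^ j) (d * p ^ j) ≡ (d + 1) [MOD p] := by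
  haveI : Fact p.Prime := ⟨hp⟩
  intro j
  induction j with
  | zero =>
    intro d
    rw [pow_zero, mul_one, mul_one, Nat.choose_succ_self_right]
  | succ j ih =>
    intro d
    have h1 : ∀ a : ℕ, (a * p ^ (j + 1)) % p = 0 := by
      intro a
      rw [pow_succ, ← mul_assoc, Nat.mul_mod_left]
    have h2 : ∀ a : ℕ, (a * p ^ (j + 1)) / p = a * p ^ j := by
      intro a
      rw [pow_succ, ← mul_assoc, Nat.mul_div_cancel _ hp.pos]
    calc Nat.choose ((d + 1) * p ^ (j + 1)) (d * p ^ (j + 1))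
        ≡ Nat.choose (((d + 1) * p ^ (j + 1)) % p) ((d * p ^ (j + 1)) % p) *
            Nat.choose (((d + 1) * p ^ (j + 1)) / p) ((d * p ^ (j + 1)) / p) [MOD p] :=
          Choose.choose_modEq_choose_mod_mul_choose_div_nat
      _ = Nat.choose ((d + 1) * p ^ j) (d * p ^ j) := by
          rw [h1, h1, h2, h2, Nat.choose_self, one_mul]
      _ ≡ (d + 1) [MOD p] := ih d

private lemma digit_getD {p : ℕ} (hp : 1 < p) :
    ∀ j n : ℕ, (Nat.digits p n).getD j 0 = n / p ^ j % p := by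
  intro j
  induction j with
  | zero =>
    intro n
    rcases Nat.eq_zero_or_pos n with rfl | hn
    · simp
    · rw [Nat.digits_def' hp hn]
      simp
  | succ j ih =>
    intro n
    rcases Nat.eq_zero_or_pos n with rfl | hn
    · simp
    · rw [Nat.digits_def' hp hn, List.getD_cons_succ, ih, Nat.div_div_eq_div_mul, ← pow_succ']

/-- let `A = k[x]/(x^{p^r})` with `x` primitive, over a field `k` of
characteristic `p`.  Its dual algebra `A*` has basis `x^{i*}` (`i < p^r`, here the family
`e`), with multiplication `x^{a*} · x^{b*} = C(a+b, a) x^{(a+b)*}` (where `x^{m*} = 0` for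
`m ≥ p^r`).  Then `A* ≅ ⨂_{i=0}^{r-1} k[yᵢ]/(yᵢ^p)` with `yᵢ = x^{pⁱ*}`: in particular
`(x^{pⁱ*})^p = 0`, the elements `x^{pⁱ*}` generate `A*` as an algebra, and `x^{i*}` is
expressible as the product determined by the base-`p` digits of `i`. -/
theorem stmt15 (k : Type*) [Field k] (p r : ℕ) (hp : p.Prime) [CharP k p] (hr : 0 < r)
    (B : Type*) [CommRing B] [Algebra k B]
    (b : Module.Basis (Fin (p ^ r)) k B)
    (e : ℕ → B) (he : ∀ n : ℕ, e n = if h : n < p ^ r then b ⟨n, h⟩ else 0)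
    (he0 : e 0 = 1)
    (hmul : ∀ a c : ℕ, e a * e c = (Nat.choose (a + c) a : k) • e (a + c)) :
    (∀ i : ℕ, i < r → e (p ^ i) ^ p = 0) ∧
    (∀ n : ℕ, n < p ^ r →
      e n = (∏ j ∈ Finset.range r, (((Nat.digits p n).getD j 0).factorial : k))⁻¹ •
        ∏ j ∈ Finset.range r, e (p ^ j) ^ ((Nat.digits p n).getD j 0)) ∧
    Algebra.adjoin k (Set.range fun i : Fin r => e (p ^ (i : ℕ))) = ⊤ := by
  haveI : Fact p.Prime := ⟨hp⟩
  have hp1 : 1 < p := hp.one_lt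
  have ppos : 0 < p := hp.pos
  have hdig : ∀ j n : ℕ, (Nat.digits p n).getD j 0 = n / p ^ j % p := digit_getD hp1
  -- powers are scalar multiples
  have hEpow : ∀ j d : ℕ, ∃ c : ℕ, e (p ^ j) ^ d = (c : k) • e (d * p ^ j) := by
    intro j d
    induction d with
    | zero => exact ⟨1, by simp [he0]⟩
    | succ d ih =>
      obtain ⟨c, hc⟩ := ih
      refine ⟨c * Nat.choose (d * p ^ j + p ^ j) (d * p ^ j), ?_⟩
      rw [pow_succ, hc, smul_mul_assoc, hmul, smul_smul, add_one_mul, Nat.cast_mul]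
  -- Part 1
  have part1 : ∀ i : ℕ, i < r → e (p ^ i) ^ p = 0 := by
    intro i _
    obtain ⟨c, hc⟩ := hEpow i (p - 1)
    have hps : p - 1 + 1 = p := Nat.succ_pred_eq_of_pos ppos
    have hsum : (p - 1) * p ^ i + p ^ i = p ^ (i + 1) := by
      rw [← add_one_mul, hps, ← pow_succ']
    have h0 : e (p ^ i) ^ p =
        (c : k) • ((Nat.choose (p ^ (i + 1)) ((p - 1) * p ^ i) : k) • e (p ^ (i + 1))) := by
      have hsplit : e (p ^ i) ^ p = e (p ^ i) ^ (p - 1) * e (p ^ i) := by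
        rw [← pow_succ, hps]
      rw [hsplit, hc, smul_mul_assoc, hmul, hsum]
    have hne0 : (p - 1) * p ^ i ≠ 0 :=
      Nat.mul_ne_zero (by omega) (pow_ne_zero _ (by omega))
    have hnepow : (p - 1) * p ^ i ≠ p ^ (i + 1) := by
      have : (p - 1) * p ^ i < p * p ^ i :=
        (Nat.mul_lt_mul_right (pow_pos ppos i)).2 (by omega)
      rw [pow_succ']
      omega
    have hdvd : p ∣ Nat.choose (p ^ (i + 1)) ((p - 1) * p ^ i) :=
      hp.dvd_choose_pow hne0 hnepow
    have hz : ((Nat.choose (p ^ (i + 1)) ((p - 1) * p ^ i) : ℕ) : k) = 0 :=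
      (CharP.cast_eq_zero_iff k p _).2 hdvd
    rw [h0, hz, zero_smul, smul_zero]
  -- digit powers with factorial coefficients
  have hA : ∀ j d : ℕ, d < p → e (p ^ j) ^ d = (d.factorial : k) • e (d * p ^ j) := by
    intro j d
    induction d with
    | zero => intro _; simp [he0]
    | succ d ih =>
      intro hd
      rw [pow_succ, ih (by omega), smul_mul_assoc, hmul, smul_smul]
      have hcong : (Nat.choose (d * p ^ j + p ^ j) (d * p ^ j) : k) = ((d + 1 : ℕ) : k) := by
        apply CharP.natCast_eq_natCast' k p
        have h := lucasB hp j d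
        rwa [add_one_mul] at h
      rw [hcong, ← add_one_mul]
      congr 1
      push_cast [Nat.factorial_succ]
      ring
  -- product over digits reconstructs e (n % p ^ m)
  have hB : ∀ m n : ℕ, ∏ j ∈ Finset.range m, e (n / p ^ j % p * p ^ j) = e (n % p ^ m) := by
    intro m n
    induction m with
    | zero => simp [he0, Nat.mod_one]
    | succ m ih =>
      rw [Finset.prod_range_succ, ih, hmul]
      have hlt : n % p ^ m < p ^ m := Nat.mod_lt _ (pow_pos ppos m)
      have hcong : (Nat.choose (n % p ^ m + n / p ^ m % p * p ^ m) (n % p ^ m) : k) = 1 := by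
        have h := lucasA hp m (n % p ^ m) (n / p ^ m % p) hlt
        rw [add_comm] at h
        have h2 := CharP.natCast_eq_natCast' k p h
        simpa using h2
      have hmod : n % p ^ m + n / p ^ m % p * p ^ m = n % p ^ (m + 1) := by
        have hM := Nat.div_add_mod (n % (p ^ m * p)) (p ^ m)
        rw [Nat.mod_mul_right_div_self, Nat.mod_mod_of_dvd _ (dvd_mul_right (p ^ m) p)] at hM
        rw [pow_succ, ← hM]
        ring
      rw [hcong, one_smul, hmod]
  -- Part 2
  have part2 : ∀ n : ℕ, n < p ^ r →
      e n = (∏ j ∈ Finset.range r, (((Nat.digits p n).getD j 0).factorial : k))⁻¹ •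
        ∏ j ∈ Finset.range r, e (p ^ j) ^ ((Nat.digits p n).getD j 0) := by
    intro n hn
    simp only [hdig]
    have hd : ∀ j : ℕ, n / p ^ j % p < p := fun j => Nat.mod_lt _ ppos
    have hexp : ∏ j ∈ Finset.range r, e (p ^ j) ^ (n / p ^ j % p)
        = (∏ j ∈ Finset.range r, ((n / p ^ j % p).factorial : k)) • e n := by
      calc ∏ j ∈ Finset.range r, e (p ^ j) ^ (n / p ^ j % p)
          = ∏ j ∈ Finset.range r,
              ((n / p ^ j % p).factorial : k) • e (n / p ^ j % p * p ^ j) :=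
            Finset.prod_congr rfl fun j _ => hA j _ (hd j)
        _ = (∏ j ∈ Finset.range r, ((n / p ^ j % p).factorial : k)) •
              ∏ j ∈ Finset.range r, e (n / p ^ j % p * p ^ j) := by
            simp [Algebra.smul_def, Finset.prod_mul_distrib]
        _ = (∏ j ∈ Finset.range r, ((n / p ^ j % p).factorial : k)) • e n := by
            rw [hB r n, Nat.mod_eq_of_lt hn]
    have hne : (∏ j ∈ Finset.range r, ((n / p ^ j % p).factorial : k)) ≠ 0 := by
      refine Finset.prod_ne_zero_iff.2 fun j _ => ?_
      intro h0
      have := (CharP.cast_eq_zero_iff k p _).1 h0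
      have := (Nat.Prime.dvd_factorial hp).1 this
      have := hd j
      omega
    rw [hexp, inv_smul_smul₀ hne]
  -- Part 3
  have part3 : Algebra.adjoin k (Set.range fun i : Fin r => e (p ^ (i : ℕ))) = ⊤ := by
    set S := Algebra.adjoin k (Set.range fun i : Fin r => e (p ^ (i : ℕ))) with hS
    have hgen : ∀ j : ℕ, j < r → e (p ^ j) ∈ S := fun j hj =>
      Algebra.subset_adjoin ⟨⟨j, hj⟩, rfl⟩
    have hmem : ∀ i : Fin (p ^ r), b i ∈ S := by
      intro i
      have hbe : e (i : ℕ) = b i := by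
        rw [he (i : ℕ), dif_pos i.isLt]
      rw [← hbe, part2 (i : ℕ) i.isLt]
      refine Subalgebra.smul_mem _ ?_ _
      refine prod_mem fun j hj => ?_
      exact pow_mem (hgen j (Finset.mem_range.1 hj)) _
    rw [eq_top_iff]
    intro x _
    exact (Submodule.span_le.2 (by rintro _ ⟨i, rfl⟩; exact hmem i) :
      Submodule.span k (Set.range ⇑b) ≤ Subalgebra.toSubmodule S) (Module.Basis.mem_span b x)
  exact ⟨part1, part2, part3⟩
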